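/- For every bounded linear operator A on a complex Hilbert space, (1/2) sqrt( ‖ |A|² + |A*|² ‖ + ‖ |A||A*| + |A*||A| ‖ ) ≤ (1/2)( ‖A‖ + ‖A²‖^{1/2} ). -/

import Mathlib

variable {H : Type*} [NormedAddCommGroup H] [InnerProductSpace ℂ H] [CompleteSpace H]

/-- The numerical radius of a bounded linear operator. -/
noncomputable def numRadius (A : H →L[ℂ] H) : ℝ :=
  ⨆ x : {x : H // ‖x‖ = 1}, ‖(inner ℂ (A x) (x : H) : ℂ)‖

/-- The absolute value |A| = (A*A)^(1/2). -/
noncomputable def absOp (A : H →L[ℂ] H) : H →L[ℂ] H :=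
  CFC.sqrt (ContinuousLinearMap.adjoint A * A)

/-- Real powers of an operator via continuous functional calculus. -/
noncomputable def opRpow (T : H →L[ℂ] H) (r : ℝ) : H →L[ℂ] H :=
  cfc (fun t : ℝ => t ^ r) T

set_option maxHeartbeats 1000000 in
set_option synthInstance.maxHeartbeats 400000 in
theorem stmt7 (A : H →L[ℂ] H) :
    (1/2) * Real.sqrt (‖(absOp A)^2 + (absOp (ContinuousLinearMap.adjoint A))^2‖ +
      ‖absOp A * absOp (ContinuousLinearMap.adjoint A) +
        absOp (ContinuousLinearMap.adjoint A) * absOp A‖) ≤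
    (1/2) * (‖A‖ + ‖A^2‖ ^ ((1:ℝ)/2)) := by
  have hstar : ∀ T : H →L[ℂ] H, star T = ContinuousLinearMap.adjoint T :=
    fun T => ContinuousLinearMap.star_eq_adjoint T
  set B : H →L[ℂ] H := absOp A with hBdef
  set C : H →L[ℂ] H := absOp (ContinuousLinearMap.adjoint A) with hCdef
  have hB : 0 ≤ B := by rw [hBdef]; unfold absOp; exact CFC.sqrt_nonneg _
  have hC : 0 ≤ C := by rw [hCdef]; unfold absOp; exact CFC.sqrt_nonneg _
  have hBsa : star B = B := (IsSelfAdjoint.of_nonneg hB).star_eq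
  have hCsa : star C = C := (IsSelfAdjoint.of_nonneg hC).star_eq
  have hB2 : B^2 = star A * A := by
    rw [hBdef, absOp, ← hstar A]
    exact CFC.sq_sqrt _ (star_mul_self_nonneg A)
  have hC2 : C^2 = A * star A := by
    rw [hCdef, absOp, ← hstar, ← hstar, star_star]
    exact CFC.sq_sqrt _ (by simpa using star_mul_self_nonneg (star A))
  set a : ℝ := ‖A‖ with hadef
  have ha : 0 ≤ a := norm_nonneg A
  set b2 : ℝ := ‖A^2‖ with hb2def
  have hb2 : 0 ≤ b2 := norm_nonneg _
  have hb2a : b2 ≤ a * a := by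
    rw [hb2def, sq]; exact norm_mul_le A A
  -- ‖B*C‖ = ‖A^2‖
  have hk1 : ‖B * C‖ * ‖B * C‖ = ‖A * C‖ * ‖A * C‖ := by
    rw [← CStarRing.norm_star_mul_self (x := B * C), ← CStarRing.norm_star_mul_self (x := A * C)]
    congr 1
    rw [star_mul, star_mul, hBsa, hCsa]
    calc C * B * (B * C) = C * (B * B) * C := by noncomm_ring
      _ = C * (star A * A) * C := by rw [← sq, hB2]
      _ = C * star A * (A * C) := by noncomm_ring
  have hk2 : ‖A * C‖ * ‖A * C‖ = b2 * b2 := by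
    rw [← CStarRing.norm_self_mul_star (x := A * C), hb2def,
      ← CStarRing.norm_self_mul_star (x := A^2)]
    congr 1
    rw [star_mul, hCsa]
    calc A * C * (C * star A) = A * (C * C) * star A := by noncomm_ring
      _ = A * (A * star A) * star A := by rw [← sq, hC2]
      _ = A^2 * star (A^2) := by rw [star_pow]; noncomm_ring
  have hk : ‖B * C‖ = b2 :=
    (mul_self_inj_of_nonneg (norm_nonneg _) hb2).mp (hk1.trans hk2)
  -- bound on the cross term
  have hS2 : ‖B * C + C * B‖ ≤ 2 * b2 := by
    calc ‖B * C + C * B‖ ≤ ‖B * C‖ + ‖C * B‖ := norm_add_le _ _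
      _ = ‖B * C‖ + ‖star (B * C)‖ := by rw [star_mul, hBsa, hCsa]
      _ = 2 * b2 := by rw [norm_star, hk]; ring
  -- bound on s = ‖B^2 + C^2‖
  set s : ℝ := ‖B^2 + C^2‖ with hsdef
  have hs : 0 ≤ s := norm_nonneg _
  have hT : 0 ≤ B^2 + C^2 :=
    add_nonneg (by rw [hB2]; exact star_mul_self_nonneg A)
      (by rw [hC2]; exact mul_star_self_nonneg A)
  have hTsa : star (B^2 + C^2) = B^2 + C^2 := (IsSelfAdjoint.of_nonneg hT).star_eq
  have hBn : ‖B^2‖ = a * a := by rw [hB2, hadef, CStarRing.norm_star_mul_self]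
  have hCn : ‖C^2‖ = a * a := by rw [hC2, hadef, CStarRing.norm_self_mul_star]
  have hB4 : B^2 * B^2 ≤ (a*a) • B^2 := by
    have h := CStarAlgebra.star_left_conjugate_le_norm_smul (a := B) (b := B^2)
      ((IsSelfAdjoint.of_nonneg hB).pow 2)
    rw [hBsa, hBn] at h
    calc B^2 * B^2 = B * B^2 * B := by noncomm_ring
      _ ≤ (a*a) • (B * B) := h
      _ = (a*a) • B^2 := by rw [sq]
  have hC4 : C^2 * C^2 ≤ (a*a) • C^2 := by
    have h := CStarAlgebra.star_left_conjugate_le_norm_smul (a := C) (b := C^2)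
      ((IsSelfAdjoint.of_nonneg hC).pow 2)
    rw [hCsa, hCn] at h
    calc C^2 * C^2 = C * C^2 * C := by noncomm_ring
      _ ≤ (a*a) • (C * C) := h
      _ = (a*a) • C^2 := by rw [sq]
  have hsq4 : 0 ≤ B^2 * B^2 := by
    have h : B^2 * B^2 = star (B^2) * B^2 := by rw [star_pow, hBsa]
    rw [h]; exact star_mul_self_nonneg (B^2)
  have hdiag : ‖B^2 * B^2 + C^2 * C^2‖ ≤ a * a * s := by
    have hle : B^2 * B^2 + C^2 * C^2 ≤ (a*a) • (B^2 + C^2) := by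
      rw [smul_add]; exact add_le_add hB4 hC4
    have h0 : 0 ≤ B^2 * B^2 + C^2 * C^2 := by
      have hc4 : 0 ≤ C^2 * C^2 := by
        have h : C^2 * C^2 = star (C^2) * C^2 := by rw [star_pow, hCsa]
        rw [h]; exact star_mul_self_nonneg (C^2)
      exact add_nonneg hsq4 hc4
    calc ‖B^2 * B^2 + C^2 * C^2‖ ≤ ‖(a*a) • (B^2 + C^2)‖ :=
          CStarAlgebra.norm_le_norm_of_nonneg_of_le h0 hle
      _ = a * a * s := by
          rw [norm_smul, Real.norm_of_nonneg (mul_nonneg ha ha), hsdef]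
  have hcross : ‖B^2 * C^2‖ ≤ a * a * b2 := by
    have : B^2 * C^2 = star A * A^2 * star A := by
      rw [hB2, hC2, sq]; noncomm_ring
    rw [this]
    calc ‖star A * A^2 * star A‖ ≤ ‖star A * A^2‖ * ‖star A‖ := norm_mul_le _ _
      _ ≤ ‖star A‖ * ‖A^2‖ * ‖star A‖ :=
          mul_le_mul_of_nonneg_right (norm_mul_le _ _) (norm_nonneg _)
      _ = a * a * b2 := by rw [norm_star, hadef, hb2def]; ring
  have hcross' : ‖C^2 * B^2‖ ≤ a * a * b2 := by
    have : C^2 * B^2 = star (B^2 * C^2) := by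
      rw [star_mul, star_pow, star_pow, hBsa, hCsa]
    rw [this, norm_star]; exact hcross
  have hkey : s * s ≤ a*a*s + 2*(a*a*b2) := by
    have h1 : s * s = ‖(B^2 + C^2) * (B^2 + C^2)‖ := by
      rw [hsdef, ← CStarRing.norm_star_mul_self (x := B^2 + C^2), hTsa]
    have h2 : (B^2 + C^2) * (B^2 + C^2) =
        (B^2 * B^2 + C^2 * C^2) + (B^2 * C^2 + C^2 * B^2) := by noncomm_ring
    calc s * s = ‖(B^2 * B^2 + C^2 * C^2) + (B^2 * C^2 + C^2 * B^2)‖ := by rw [h1, h2]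
      _ ≤ ‖B^2 * B^2 + C^2 * C^2‖ + ‖B^2 * C^2 + C^2 * B^2‖ := norm_add_le _ _
      _ ≤ (a*a*s) + (‖B^2 * C^2‖ + ‖C^2 * B^2‖) :=
          add_le_add hdiag (norm_add_le _ _)
      _ ≤ a*a*s + 2*(a*a*b2) := by linarith
  -- now pure real arithmetic
  set b : ℝ := Real.sqrt b2 with hbdef
  have hb : 0 ≤ b := Real.sqrt_nonneg _
  have hbb : b * b = b2 := Real.mul_self_sqrt hb2
  have hba : b ≤ a := by
    rw [hbdef]
    calc Real.sqrt b2 ≤ Real.sqrt (a*a) := Real.sqrt_le_sqrt hb2a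
      _ = a := by rw [Real.sqrt_mul_self ha]
  have hrpow : ‖A^2‖ ^ ((1:ℝ)/2) = b := by
    rw [hbdef, ← hb2def, Real.sqrt_eq_rpow]
  rw [hrpow]
  have hmain : s + ‖B * C + C * B‖ ≤ (a + b)^2 := by
    have hkey' : s*s ≤ a*a*s + 2*(a*a*(b*b)) := by rw [hbb]; exact hkey
    have hc0 : 0 ≤ a*a + 2*(a*b) - b*b := by
      nlinarith [mul_nonneg ha hb, mul_self_le_mul_self hb hba]
    have hca : a*a ≤ a*a + 2*(a*b) - b*b := by
      nlinarith [mul_nonneg hb (sub_nonneg.2 hba)]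
    have h1 : 2*(a*a*(b*b)) ≤ (a*a + 2*(a*b) - b*b)*(a*a + 2*(a*b) - b*b)
        - a*a*(a*a + 2*(a*b) - b*b) := by
      nlinarith [mul_nonneg (mul_nonneg hb hb) (sq_nonneg (a-b)),
        mul_nonneg (mul_nonneg hb ha) (mul_nonneg (sub_nonneg.2 hba)
          (by linarith : (0:ℝ) ≤ a + b))]
    have hsc : s ≤ a*a + 2*(a*b) - b*b := by
      by_contra h
      push_neg at h
      nlinarith [mul_pos (sub_pos.2 h) (by nlinarith : (0:ℝ) < s + (a*a + 2*(a*b) - b*b) - a*a)]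
    have hS2' : ‖B * C + C * B‖ ≤ 2*(b*b) := by rw [hbb]; exact hS2
    nlinarith
  calc (1/2) * Real.sqrt (s + ‖B * C + C * B‖)
      ≤ (1/2) * Real.sqrt ((a+b)^2) := by
        have := Real.sqrt_le_sqrt hmain
        linarith
      _ = (1/2) * (a + b) := by rw [Real.sqrt_sq (by linarith)]
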